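/- Let C₀(Q) ⊆ A be a central non-degenerate inclusion such that the set Q^unif_simple = {q ∈ Q : A/J^unif_q is simple} is dense in Q. If there exists an essentially faithful conditional expectation E : A → C₀(Q), then the inclusion C₀(Q) ⊆ A is essential. -/

import Mathlib

open scoped ComplexOrder
open ZeroAtInfty

/-- The smallest closed two-sided ideal of `A` containing `S` (as a set): the intersection of
all closed two-sided ideals containing `S`. -/
def closedIdealGenBy {A : Type*} [NonUnitalCStarAlgebra A] (S : Set A) : Set A :=
  ⋂₀ {L : Set A | (∃ I : TwoSidedIdeal A, (I : Set A) = L) ∧ IsClosed L ∧ S ⊆ L}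

/-- `J^unif_q`: the closed two-sided ideal of `A` generated by
`C_{0,q}(Q) = {f ∈ C₀(Q) : f q = 0}` (viewed in `A` via the inclusion `ι`). -/
def Junif {Q : Type*} [TopologicalSpace Q] [LocallyCompactSpace Q] [T2Space Q]
    {A : Type*} [NonUnitalCStarAlgebra A] (ι : C₀(Q, ℂ) →⋆ₙₐ[ℂ] A) (q : Q) : Set A :=
  closedIdealGenBy {a : A | ∃ f : C₀(Q, ℂ), f q = 0 ∧ a = ι f}

/-- `A / J` is a simple C*-algebra, encoded via the correspondence between closed two-sided
ideals of `A / J` and closed two-sided ideals of `A` containing `J`: `J` is proper and the only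
closed two-sided ideals of `A` containing `J` are `J` itself and `A`. -/
def QuotientSimpleBy {A : Type*} [NonUnitalCStarAlgebra A] (J : Set A) : Prop :=
  J ≠ Set.univ ∧ ∀ L : TwoSidedIdeal A, IsClosed (L : Set A) → J ⊆ (L : Set A) →
    (L : Set A) = J ∨ (L : Set A) = Set.univ

/-- The inclusion `Bs ⊆ A` is essential. -/
def EssentialIncl {A : Type*} [NonUnitalCStarAlgebra A] (Bs : Set A) : Prop :=
  ∀ L : TwoSidedIdeal A, IsClosed (L : Set A) → (L : Set A) ≠ Set.univ →
    Bs ∩ (L : Set A) = {0} → (L : Set A) = {0}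

namespace Stmt9Aux

open Filter

set_option linter.unusedSectionVars false

section C0lemmas
variable {Q : Type*} [TopologicalSpace Q] [LocallyCompactSpace Q] [T2Space Q]

lemma c0_norm_le (f : C₀(Q, ℂ)) {C : ℝ} (hC : 0 ≤ C) (h : ∀ x, ‖f x‖ ≤ C) : ‖f‖ ≤ C := by
  rw [← ZeroAtInftyContinuousMap.norm_toBCF_eq_norm]
  exact (BoundedContinuousFunction.norm_le hC).2 h

lemma c0_apply_le_norm (f : C₀(Q, ℂ)) (x : Q) : ‖f x‖ ≤ ‖f‖ := by
  rw [← ZeroAtInftyContinuousMap.norm_toBCF_eq_norm]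
  exact BoundedContinuousFunction.norm_coe_le_norm f.toBCF x

lemma continuous_eval_c0 (q : Q) : Continuous (fun F : C₀(Q, ℂ) => F q) :=
  (continuous_eval_const (F := BoundedContinuousFunction Q ℂ) q).comp
    (ZeroAtInftyContinuousMap.isometry_toBCF (α := Q) (β := ℂ)).continuous

noncomputable def compC0 (h : C₀(Q, ℂ)) (φ : ℂ → ℂ) (hφ : Continuous φ) (h0 : φ 0 = 0) :
    C₀(Q, ℂ) :=
  ⟨⟨fun x => φ (h x), hφ.comp (map_continuous h)⟩, by
    have h2 := (hφ.tendsto 0).comp h.zero_at_infty'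
    rw [h0] at h2
    exact h2⟩

@[simp] lemma compC0_apply (h : C₀(Q, ℂ)) (φ : ℂ → ℂ) (hφ : Continuous φ) (h0 : φ 0 = 0)
    (x : Q) : compC0 h φ hφ h0 x = φ (h x) := rfl

/-- A bump function: `1` on an open neighbourhood of `q`, vanishing off `U`,
real valued in `[0,1]`. -/
lemma exists_bump (q : Q) {U : Set Q} (hU : IsOpen U) (hq : q ∈ U) :
    ∃ (g : C₀(Q, ℂ)) (V : Set Q), IsOpen V ∧ q ∈ V ∧ (∀ x ∈ V, g x = 1) ∧
      (∀ x, x ∉ U → g x = 0) ∧ ∀ x, g x = ((g x).re : ℂ) ∧ 0 ≤ (g x).re ∧ (g x).re ≤ 1 := by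
  obtain ⟨K, hKc, hKq, hKU⟩ := exists_compact_subset hU hq
  obtain ⟨fr, hfr1, hfr0, hfrsupp, hfr01⟩ :=
    exists_continuous_one_zero_of_isCompact hKc (isClosed_compl_iff.mpr hU)
      (Set.disjoint_left.mpr (fun x hxK hxU => hxU (hKU hxK)))
  have hzero : Tendsto (fun x => ((fr x : ℝ) : ℂ)) (cocompact Q) (nhds 0) := by
    have h1 : (tsupport fr)ᶜ ∈ cocompact Q :=
      Filter.mem_cocompact.mpr ⟨tsupport fr, hfrsupp, Set.Subset.rfl⟩
    have h2 : ∀ᶠ x in cocompact Q, ((fr x : ℝ) : ℂ) = 0 := by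
      filter_upwards [h1] with x hx
      simp [image_eq_zero_of_notMem_tsupport hx]
    exact Tendsto.congr' (EventuallyEq.symm h2) tendsto_const_nhds
  refine ⟨⟨⟨fun x => ((fr x : ℝ) : ℂ), Complex.continuous_ofReal.comp fr.continuous⟩, hzero⟩,
    interior K, isOpen_interior, hKq, ?_, ?_, ?_⟩
  · intro x hx
    have : fr x = 1 := hfr1 (interior_subset hx)
    simp [ZeroAtInftyContinuousMap.coe_mk, this]
  · intro x hx
    have : fr x = 0 := hfr0 hx
    simp [ZeroAtInftyContinuousMap.coe_mk, this]
  · intro x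
    refine ⟨by simp, by simpa using (hfr01 x).1, by simpa using (hfr01 x).2⟩

/-- `hpow h n = h^(n+1)` (no unit available). -/
noncomputable def hpow (h : C₀(Q, ℂ)) : ℕ → C₀(Q, ℂ)
  | 0 => h
  | n + 1 => h * hpow h n

lemma hpow_apply (h : C₀(Q, ℂ)) (n : ℕ) (x : Q) : hpow h n x = (h x) ^ (n + 1) := by
  induction n with
  | zero => simp [hpow]
  | succ n ih =>
    show (h * hpow h n) x = _
    rw [ZeroAtInftyContinuousMap.mul_apply, ih, pow_succ]
    ring

end C0lemmas

section Ideals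

variable {A : Type*} [NonUnitalCStarAlgebra A]

lemma closedIdealGenBy_subset {S : Set A} {I : TwoSidedIdeal A} (hc : IsClosed (I : Set A))
    (hS : S ⊆ (I : Set A)) : closedIdealGenBy S ⊆ (I : Set A) :=
  Set.sInter_subset_of_mem ⟨⟨I, rfl⟩, hc, hS⟩

lemma subset_closedIdealGenBy (S : Set A) : S ⊆ closedIdealGenBy S := by
  intro x hx T hT
  exact hT.2.2 hx

lemma isClosed_closedIdealGenBy (S : Set A) : IsClosed (closedIdealGenBy S) := by
  apply isClosed_sInter
  rintro T ⟨_, hc, _⟩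
  exact hc

lemma mem_closedIdealGenBy {S : Set A} {x : A}
    (h : ∀ I : TwoSidedIdeal A, IsClosed (I : Set A) → S ⊆ (I : Set A) → x ∈ I) :
    x ∈ closedIdealGenBy S := by
  rintro T ⟨⟨I, rfl⟩, hc, hS⟩
  exact h I hc hS

/-- `closedIdealGenBy S` as a two-sided ideal. -/
def genIdeal (S : Set A) : TwoSidedIdeal A :=
  TwoSidedIdeal.mk' (closedIdealGenBy S)
    (mem_closedIdealGenBy fun I _ _ => I.zero_mem)
    (fun hx hy => mem_closedIdealGenBy fun I hc hS =>
      I.add_mem (hx _ ⟨⟨I, rfl⟩, hc, hS⟩) (hy _ ⟨⟨I, rfl⟩, hc, hS⟩))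
    (fun hx => mem_closedIdealGenBy fun I hc hS => I.neg_mem (hx _ ⟨⟨I, rfl⟩, hc, hS⟩))
    (fun hy => mem_closedIdealGenBy fun I hc hS => I.mul_mem_left _ _ (hy _ ⟨⟨I, rfl⟩, hc, hS⟩))
    (fun hx => mem_closedIdealGenBy fun I hc hS => I.mul_mem_right _ _ (hx _ ⟨⟨I, rfl⟩, hc, hS⟩))

lemma coe_genIdeal (S : Set A) : (genIdeal S : Set A) = closedIdealGenBy S :=
  TwoSidedIdeal.coe_mk' _ _ _ _ _ _

end Ideals

section Key

variable {Q : Type*} [TopologicalSpace Q] [LocallyCompactSpace Q] [T2Space Q]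
variable {A : Type*} [NonUnitalCStarAlgebra A]

/-- Key lemma: if `L` is a closed two-sided ideal with `range ι ∩ L = {0}`, then for every
nonnegative-real-valued `h ∈ C₀(Q)`, `dist (ι h) L ≥ ‖h‖`. -/
lemma key (ι : C₀(Q, ℂ) →⋆ₙₐ[ℂ] A) (hisom : Isometry ι)
    (L : TwoSidedIdeal A) (hLc : IsClosed (L : Set A))
    (hinter : Set.range ι ∩ (L : Set A) = {0})
    (h : C₀(Q, ℂ)) (hre : ∀ x, h x = ((h x).re : ℂ)) (hpos : ∀ x, 0 ≤ (h x).re)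
    {l : A} (hl : l ∈ L) : ‖h‖ ≤ ‖ι h - l‖ := by
  have hnorm : ∀ u : C₀(Q, ℂ), ‖ι u‖ = ‖u‖ := fun u =>
    hisom.norm_map_of_map_zero (map_zero ι) u
  by_contra hcon
  push_neg at hcon
  set r := ‖ι h - l‖ with hr
  have hr0 : 0 ≤ r := norm_nonneg _
  obtain ⟨c, hrc, hch⟩ : ∃ c, r < c ∧ c < ‖h‖ := ⟨(r + ‖h‖) / 2, by constructor <;> linarith⟩
  have hc0 : 0 < c := lt_of_le_of_lt hr0 hrc
  -- the sequence of approximants in L to ι (h^(n+1))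
  set seq : ℕ → A := fun n =>
    Nat.rec l (fun n ln => ι h * ln + l * ι (hpow h n) - l * ln) n with hseq
  have seq_zero : seq 0 = l := rfl
  have seq_succ : ∀ n, seq (n + 1) = ι h * seq n + l * ι (hpow h n) - l * seq n := fun n => rfl
  have seq_mem : ∀ n, seq n ∈ L := by
    intro n
    induction n with
    | zero => exact hl
    | succ n ih =>
      rw [seq_succ]
      exact L.sub_mem (L.add_mem (L.mul_mem_left _ _ ih) (L.mul_mem_right _ _ hl))
        (L.mul_mem_left _ _ ih)
  have seq_bound : ∀ n, ‖ι (hpow h n) - seq n‖ ≤ r ^ (n + 1) := by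
    intro n
    induction n with
    | zero => simpa [hpow, seq_zero] using hr.ge
    | succ n ih =>
      have key_eq : ι (hpow h (n + 1)) - seq (n + 1) = (ι h - l) * (ι (hpow h n) - seq n) := by
        rw [seq_succ]
        have : ι (hpow h (n + 1)) = ι h * ι (hpow h n) := by
          show ι (h * hpow h n) = _
          rw [map_mul]
        rw [this]
        noncomm_ring
      rw [key_eq, pow_succ]
      calc ‖(ι h - l) * (ι (hpow h n) - seq n)‖ ≤ ‖ι h - l‖ * ‖ι (hpow h n) - seq n‖ :=
            norm_mul_le _ _
        _ ≤ r * r ^ (n + 1) := by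
            apply mul_le_mul le_rfl ih (norm_nonneg _) hr0
        _ = r ^ (n + 1) * r := by ring
  -- `k = (h - c)⁺` and `s n = k / (max h c)^(n+1)`
  have hck : max (-c) 0 = 0 := max_eq_right (by linarith)
  set k : C₀(Q, ℂ) := compC0 h (fun z => ((max (z.re - c) 0 : ℝ) : ℂ))
    (Complex.continuous_ofReal.comp ((Complex.continuous_re.sub continuous_const).max
      continuous_const))
    (by simp [hck]) with hk
  have hkapp : ∀ x, k x = ((max ((h x).re - c) 0 : ℝ) : ℂ) := fun x => rfl
  have hknorm : ∀ x, ‖k x‖ = max ((h x).re - c) 0 := by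
    intro x
    rw [hkapp, Complex.norm_real, Real.norm_eq_abs, abs_of_nonneg (le_max_right _ _)]
  set s : ℕ → C₀(Q, ℂ) := fun n => compC0 h
    (fun z => ((max (z.re - c) 0 / (max z.re c) ^ (n + 1) : ℝ) : ℂ))
    (Complex.continuous_ofReal.comp (Continuous.div
      ((Complex.continuous_re.sub continuous_const).max continuous_const)
      ((Complex.continuous_re.max continuous_const).pow _)
      (fun z => pow_ne_zero _ (ne_of_gt (lt_of_lt_of_le hc0 (le_max_right _ _))))))
    (by simp [hck]) with hs
  -- the key factorization `k = s n * hpow h n`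
  have hfact : ∀ n, k = s n * hpow h n := by
    intro n
    ext x
    rw [ZeroAtInftyContinuousMap.mul_apply, hpow_apply, hkapp]
    show _ = ((max ((h x).re - c) 0 / (max (h x).re c) ^ (n + 1) : ℝ) : ℂ) * (h x) ^ (n + 1)
    rcases le_or_gt (h x).re c with hle | hlt
    · have : max ((h x).re - c) 0 = 0 := max_eq_right (by linarith)
      rw [this]
      simp
    · have h1 : max ((h x).re - c) 0 = (h x).re - c := max_eq_left (by linarith)
      have h2 : max (h x).re c = (h x).re := max_eq_left (le_of_lt hlt)
      have h3 : (h x) ^ (n + 1) = (((h x).re ^ (n + 1) : ℝ) : ℂ) := by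
        conv_lhs => rw [hre x]
        push_cast
        ring
      rw [h1, h2, h3, ← Complex.ofReal_mul]
      congr 1
      rw [div_mul_cancel₀ _ (pow_ne_zero (n + 1) (ne_of_gt (lt_trans hc0 hlt)))]
  -- the norm bound on `s n`
  have hsnorm : ∀ n, ‖s n‖ ≤ ‖k‖ / c ^ (n + 1) := by
    intro n
    apply c0_norm_le _ (div_nonneg (norm_nonneg _) (le_of_lt (pow_pos hc0 _)))
    intro x
    show ‖((max ((h x).re - c) 0 / (max (h x).re c) ^ (n + 1) : ℝ) : ℂ)‖ ≤ _
    rw [Complex.norm_real, Real.norm_eq_abs, abs_div, abs_of_nonneg (le_max_right ((h x).re - c) 0),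
      abs_of_nonneg (le_of_lt (pow_pos (lt_of_lt_of_le hc0 (le_max_right _ _)) _))]
    apply div_le_div₀ (norm_nonneg k) _ (pow_pos hc0 _)
      (pow_le_pow_left₀ (le_of_lt hc0) (le_max_right _ _) _)
    rw [← hknorm]
    exact c0_apply_le_norm k x
  -- `ι k ∈ L`
  have hkL : ι k ∈ (L : Set A) := by
    rw [← hLc.closure_eq]
    rw [Metric.mem_closure_iff]
    intro ε hε
    have hlim : Tendsto (fun n : ℕ => ‖k‖ * (r / c) ^ (n + 1)) atTop (nhds 0) := by
      have h1 : Tendsto (fun n : ℕ => (r / c) ^ n) atTop (nhds 0) := by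
        apply tendsto_pow_atTop_nhds_zero_of_lt_one (div_nonneg hr0 (le_of_lt hc0))
        rw [div_lt_one hc0]
        exact hrc
      have := (h1.const_mul ‖k‖).comp (tendsto_add_atTop_nat 1)
      rw [mul_zero] at this
      exact this
    obtain ⟨n, hn⟩ := (Metric.tendsto_atTop.mp hlim (ε / 2) (by linarith)).imp
      (fun n hn => hn n le_rfl)
    refine ⟨ι (s n) * seq n, L.mul_mem_left _ _ (seq_mem n), ?_⟩
    have heq : ι k - ι (s n) * seq n = ι (s n) * (ι (hpow h n) - seq n) := by
      rw [hfact n, map_mul]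
      noncomm_ring
    rw [dist_eq_norm, heq]
    calc ‖ι (s n) * (ι (hpow h n) - seq n)‖ ≤ ‖ι (s n)‖ * ‖ι (hpow h n) - seq n‖ :=
          norm_mul_le _ _
      _ ≤ (‖k‖ / c ^ (n + 1)) * r ^ (n + 1) := by
          apply mul_le_mul _ (seq_bound n) (norm_nonneg _)
            (div_nonneg (norm_nonneg _) (le_of_lt (pow_pos hc0 _)))
          rw [hnorm]
          exact hsnorm n
      _ = ‖k‖ * (r / c) ^ (n + 1) := by
          rw [div_pow, div_mul_eq_mul_div, mul_div_assoc]
      _ < ε := by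
          have : ‖k‖ * (r / c) ^ (n + 1) ≥ 0 := by positivity
          have h2 : dist (‖k‖ * (r / c) ^ (n + 1)) 0 < ε / 2 := hn
          rw [Real.dist_eq, sub_zero, abs_of_nonneg this] at h2
          linarith
  -- hence `ι k = 0`, so `k = 0`
  have hk0 : k = 0 := by
    have : ι k ∈ Set.range ι ∩ (L : Set A) := ⟨Set.mem_range_self _, hkL⟩
    rw [hinter] at this
    have hik : ι k = ι 0 := by rw [map_zero]; exact this
    exact hisom.injective hik
  -- but `k` is nonzero since `‖h‖ > c`
  obtain ⟨x₀, hx₀⟩ : ∃ x, c < ‖h x‖ := by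
    by_contra hcontra
    push_neg at hcontra
    exact absurd (c0_norm_le h (le_of_lt hc0) hcontra) (not_le.mpr hch)
  have hhx₀ : ‖h x₀‖ = (h x₀).re := by
    conv_lhs => rw [hre x₀]
    rw [Complex.norm_real, Real.norm_eq_abs, abs_of_nonneg (hpos x₀)]
  have : k x₀ = 0 := by rw [hk0]; rfl
  rw [hkapp x₀] at this
  have h1 : max ((h x₀).re - c) 0 = (h x₀).re - c := by
    apply max_eq_left
    rw [← hhx₀]
    linarith
  rw [h1] at this
  have h2 : (h x₀).re - c = 0 := by exact_mod_cast this
  rw [← hhx₀] at h2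
  linarith



end Key

section Osided

variable {Q : Type*} [TopologicalSpace Q] [LocallyCompactSpace Q] [T2Space Q]
variable {A : Type*} [NonUnitalCStarAlgebra A]

/-- One-sided module property of `E` at a point `q` where `f` vanishes. -/
lemma osided (ι : C₀(Q, ℂ) →⋆ₙₐ[ℂ] A) (hisom : Isometry ι)
    (hcentral : ∀ (f : C₀(Q, ℂ)) (a : A), ι f * a = a * ι f)
    (E : A →L[ℂ] C₀(Q, ℂ))
    (hEmod : ∀ (f₁ f₂ : C₀(Q, ℂ)) (a : A), E (ι f₁ * a * ι f₂) = f₁ * E a * f₂)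
    {q : Q} {f : C₀(Q, ℂ)} (hfq : f q = 0) (d : A) : E (ι f * d) q = 0 := by
  have hnorm : ∀ u : C₀(Q, ℂ), ‖ι u‖ = ‖u‖ := fun u =>
    hisom.norm_map_of_map_zero (map_zero ι) u
  rw [← norm_le_zero_iff]
  apply le_of_forall_pos_le_add
  intro ε hε
  rw [zero_add]
  obtain ⟨δ, hδ, hδle⟩ : ∃ δ : ℝ, 0 < δ ∧ ‖E‖ * (2 * δ * ‖d‖) ≤ ε := by
    have hd1 : (0:ℝ) < 2 * ‖E‖ * ‖d‖ + 1 := by positivity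
    refine ⟨ε / (2 * ‖E‖ * ‖d‖ + 1), div_pos hε hd1, ?_⟩
    have heq : ‖E‖ * (2 * (ε / (2 * ‖E‖ * ‖d‖ + 1)) * ‖d‖)
        = ε * (2 * ‖E‖ * ‖d‖) / (2 * ‖E‖ * ‖d‖ + 1) := by
      field_simp
    rw [heq, div_le_iff₀ hd1]
    nlinarith [hε.le, norm_nonneg E, norm_nonneg d]
  -- the cutoff of `f` away from small values
  set h' : C₀(Q, ℂ) := compC0 f (fun z => z * ((min (max (‖z‖ / δ - 1) 0) 1 : ℝ) : ℂ))
    (continuous_id.mul (Complex.continuous_ofReal.comp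
      ((((continuous_norm.div_const δ).sub continuous_const).max continuous_const).min
        continuous_const)))
    (by simp) with hh'
  set g : C₀(Q, ℂ) := compC0 f (fun z => ((min (‖z‖ / δ) 1 : ℝ) : ℂ))
    (Complex.continuous_ofReal.comp ((continuous_norm.div_const δ).min continuous_const))
    (by simp) with hg
  have claim1 : g * h' = h' := by
    ext x
    rw [ZeroAtInftyContinuousMap.mul_apply]
    show ((min (‖f x‖ / δ) 1 : ℝ) : ℂ) * h' x = h' x
    rcases le_or_gt (‖f x‖) δ with hle | hlt
    · have h1 : max (‖f x‖ / δ - 1) 0 = 0 :=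
        max_eq_right (by rw [sub_nonpos]; exact (div_le_one hδ).2 hle)
      have h2 : h' x = 0 := by
        show f x * ((min (max (‖f x‖ / δ - 1) 0) 1 : ℝ) : ℂ) = 0
        rw [h1]
        simp
      rw [h2, mul_zero]
    · have h1 : min (‖f x‖ / δ) 1 = 1 := min_eq_right ((one_le_div hδ).2 (le_of_lt hlt))
      rw [h1]
      simp
  have claim2 : ‖f - h'‖ ≤ 2 * δ := by
    apply c0_norm_le _ (by linarith)
    intro x
    rw [ZeroAtInftyContinuousMap.sub_apply]
    show ‖f x - f x * ((min (max (‖f x‖ / δ - 1) 0) 1 : ℝ) : ℂ)‖ ≤ 2 * δ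
    rcases le_or_gt (‖f x‖) (2 * δ) with hle | hlt
    · calc ‖f x - f x * _‖ = ‖f x * (1 - ((min (max (‖f x‖ / δ - 1) 0) 1 : ℝ) : ℂ))‖ := by
            rw [mul_sub, mul_one]
        _ ≤ ‖f x‖ * ‖(1 - ((min (max (‖f x‖ / δ - 1) 0) 1 : ℝ) : ℂ))‖ := norm_mul_le _ _
        _ ≤ (2 * δ) * 1 := by
            apply mul_le_mul hle _ (norm_nonneg _) (by linarith)
            have : (1 : ℂ) - ((min (max (‖f x‖ / δ - 1) 0) 1 : ℝ) : ℂ)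
                = (((1 - min (max (‖f x‖ / δ - 1) 0) 1 : ℝ)) : ℂ) := by push_cast; ring
            rw [this, Complex.norm_real, Real.norm_eq_abs, abs_le]
            constructor
            · have := min_le_right (max (‖f x‖ / δ - 1) 0) 1
              linarith
            · have := le_min (le_max_right (‖f x‖ / δ - 1) 0) zero_le_one
              linarith
        _ = 2 * δ := mul_one _
    · have h1 : min (max (‖f x‖ / δ - 1) 0) 1 = 1 := by
        apply min_eq_right
        have : (2 : ℝ) ≤ ‖f x‖ / δ := by
          rw [le_div_iff₀ hδ]
          linarith
        apply le_max_of_le_left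
        linarith
      rw [h1]
      simp [hδ.le]
  have claim3 : E (ι h' * d) q = 0 := by
    have e1 : ι h' * d = ι g * d * ι h' := by
      conv_lhs => rw [← claim1]
      rw [map_mul, mul_assoc, hcentral h' d, ← mul_assoc]
    rw [e1, hEmod g h' d]
    rw [ZeroAtInftyContinuousMap.mul_apply, ZeroAtInftyContinuousMap.mul_apply]
    have hgq : g q = 0 := by
      show ((min (‖f q‖ / δ) 1 : ℝ) : ℂ) = 0
      rw [hfq]
      simp [hδ.le]
    rw [hgq, zero_mul, zero_mul]
  -- conclude
  have e2 : E (ι f * d) q = E (ι f * d) q - E (ι h' * d) q := by rw [claim3, sub_zero]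
  rw [e2]
  have e3 : E (ι f * d) q - E (ι h' * d) q = (E (ι f * d) - E (ι h' * d)) q := by
    rw [ZeroAtInftyContinuousMap.sub_apply]
  rw [e3, ← map_sub]
  have e4 : ι f * d - ι h' * d = ι (f - h') * d := by rw [map_sub, sub_mul]
  rw [e4]
  calc ‖E (ι (f - h') * d) q‖ ≤ ‖E (ι (f - h') * d)‖ := c0_apply_le_norm _ _
    _ ≤ ‖E‖ * ‖ι (f - h') * d‖ := E.le_opNorm _
    _ ≤ ‖E‖ * (‖ι (f - h')‖ * ‖d‖) := by
        apply mul_le_mul_of_nonneg_left (norm_mul_le _ _) (norm_nonneg E)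
    _ ≤ ‖E‖ * ((2 * δ) * ‖d‖) := by
        apply mul_le_mul_of_nonneg_left _ (norm_nonneg E)
        apply mul_le_mul_of_nonneg_right _ (norm_nonneg d)
        rw [hnorm]
        exact claim2
    _ ≤ ε := hδle

/-- `E` evaluated at `q` kills the ideal `J^unif_q`. -/
lemma eval_junif (ι : C₀(Q, ℂ) →⋆ₙₐ[ℂ] A) (hisom : Isometry ι)
    (hcentral : ∀ (f : C₀(Q, ℂ)) (a : A), ι f * a = a * ι f)
    (E : A →L[ℂ] C₀(Q, ℂ))
    (hEproj : ∀ f : C₀(Q, ℂ), E (ι f) = f)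
    (hEmod : ∀ (f₁ f₂ : C₀(Q, ℂ)) (a : A), E (ι f₁ * a * ι f₂) = f₁ * E a * f₂)
    (q : Q) {a : A}
    (ha : a ∈ closedIdealGenBy {a : A | ∃ f : C₀(Q, ℂ), f q = 0 ∧ a = ι f}) :
    E a q = 0 := by
  have hos : ∀ (f : C₀(Q, ℂ)), f q = 0 → ∀ d, E (ι f * d) q = 0 :=
    fun f hf d => osided ι hisom hcentral E hEmod hf d
  set N : TwoSidedIdeal A := TwoSidedIdeal.mk'
    {a : A | E a q = 0 ∧ (∀ b, E (a * b) q = 0) ∧ (∀ b, E (b * a) q = 0) ∧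
      ∀ b c, E (b * (a * c)) q = 0}
    (by
      refine ⟨by simp, fun b => by simp, fun b => by simp, fun b c => by simp⟩)
    (by
      rintro x y ⟨hx1, hx2, hx3, hx4⟩ ⟨hy1, hy2, hy3, hy4⟩
      refine ⟨by simp [hx1, hy1], fun b => ?_, fun b => ?_, fun b c => ?_⟩
      · rw [add_mul, map_add, ZeroAtInftyContinuousMap.add_apply, hx2, hy2, add_zero]
      · rw [mul_add, map_add, ZeroAtInftyContinuousMap.add_apply, hx3, hy3, add_zero]
      · rw [add_mul, mul_add, map_add, ZeroAtInftyContinuousMap.add_apply, hx4, hy4, add_zero])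
    (by
      rintro x ⟨hx1, hx2, hx3, hx4⟩
      refine ⟨by simp [hx1], fun b => ?_, fun b => ?_, fun b c => ?_⟩
      · rw [neg_mul, map_neg, ZeroAtInftyContinuousMap.neg_apply, hx2, neg_zero]
      · rw [mul_neg, map_neg, ZeroAtInftyContinuousMap.neg_apply, hx3, neg_zero]
      · rw [neg_mul, mul_neg, map_neg, ZeroAtInftyContinuousMap.neg_apply, hx4, neg_zero])
    (by
      rintro x y ⟨hy1, hy2, hy3, hy4⟩
      refine ⟨hy3 x, fun b => ?_, fun b => ?_, fun b c => ?_⟩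
      · rw [mul_assoc]
        exact hy4 x b
      · rw [← mul_assoc]
        exact hy3 (b * x)
      · rw [mul_assoc, ← mul_assoc b x (y * c)]
        exact hy4 (b * x) c)
    (by
      rintro x y ⟨hx1, hx2, hx3, hx4⟩
      refine ⟨hx2 y, fun b => ?_, fun b => ?_, fun b c => ?_⟩
      · rw [mul_assoc]
        exact hx2 (y * b)
      · exact hx4 b y
      · rw [mul_assoc]
        exact hx4 b (y * c)) with hN
  have hNcoe : (N : Set A) = {a : A | E a q = 0 ∧ (∀ b, E (a * b) q = 0) ∧
      (∀ b, E (b * a) q = 0) ∧ ∀ b c, E (b * (a * c)) q = 0} :=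
    TwoSidedIdeal.coe_mk' _ _ _ _ _ _
  have hNclosed : IsClosed (N : Set A) := by
    rw [hNcoe]
    have : {a : A | E a q = 0 ∧ (∀ b, E (a * b) q = 0) ∧ (∀ b, E (b * a) q = 0) ∧
        ∀ b c, E (b * (a * c)) q = 0}
        = {a : A | E a q = 0} ∩ ((⋂ b, {a : A | E (a * b) q = 0}) ∩
          ((⋂ b, {a : A | E (b * a) q = 0}) ∩ (⋂ b, ⋂ c, {a : A | E (b * (a * c)) q = 0}))) := by
      ext a
      simp only [Set.mem_setOf_eq, Set.mem_inter_iff, Set.mem_iInter]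
    rw [this]
    have hev : Continuous (fun F : C₀(Q, ℂ) => F q) := continuous_eval_c0 q
    refine IsClosed.inter ?_ (IsClosed.inter ?_ (IsClosed.inter ?_ ?_))
    · exact isClosed_eq (hev.comp E.continuous) continuous_const
    · exact isClosed_iInter fun b => isClosed_eq
        (hev.comp (E.continuous.comp (continuous_mul_right b))) continuous_const
    · exact isClosed_iInter fun b => isClosed_eq
        (hev.comp (E.continuous.comp (continuous_mul_left b))) continuous_const
    · exact isClosed_iInter fun b => isClosed_iInter fun c => isClosed_eq
        (hev.comp (E.continuous.comp (continuous_const.mul (continuous_mul_right c)))) continuous_const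
  have hgen : {a : A | ∃ f : C₀(Q, ℂ), f q = 0 ∧ a = ι f} ⊆ (N : Set A) := by
    rintro _ ⟨f, hfq, rfl⟩
    rw [hNcoe]
    refine ⟨by rw [hEproj]; exact hfq, fun b => hos f hfq b, fun b => ?_, fun b c => ?_⟩
    · rw [← hcentral]
      exact hos f hfq b
    · rw [← mul_assoc, ← hcentral f b, mul_assoc]
      exact hos f hfq (b * c)
  have := closedIdealGenBy_subset hNclosed hgen ha
  rw [hNcoe] at this
  exact this.1

/-- A "good bump" at `q` subordinate to `f₀`: real-valued in `[0,1]`, equal to `1` at `q`,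
and absorbed by `f₀`. -/
def GoodBump {Q : Type*} [TopologicalSpace Q] [LocallyCompactSpace Q] [T2Space Q]
    (q : Q) (f₀ g : C₀(Q, ℂ)) : Prop :=
  (∀ x, g x = ((g x).re : ℂ) ∧ 0 ≤ (g x).re ∧ (g x).re ≤ 1) ∧ g q = 1 ∧ g * f₀ = g

lemma goodBump_norm_le {q : Q} {f₀ g : C₀(Q, ℂ)} (hg : GoodBump q f₀ g) : ‖g‖ ≤ 1 := by
  apply c0_norm_le _ zero_le_one
  intro x
  obtain ⟨h1, h2, h3⟩ := hg.1 x
  rw [h1, Complex.norm_real, Real.norm_eq_abs, abs_of_nonneg h2]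
  exact h3

lemma compress_le (ι : C₀(Q, ℂ) →⋆ₙₐ[ℂ] A) (hisom : Isometry ι)
    {q : Q} {f₀ g : C₀(Q, ℂ)} (hg : GoodBump q f₀ g) (a : A) : ‖ι g * a * ι g‖ ≤ ‖a‖ := by
  have hgbn : ‖ι g‖ ≤ 1 := by
    rw [hisom.norm_map_of_map_zero (map_zero ι)]
    exact goodBump_norm_le hg
  calc ‖ι g * a * ι g‖ ≤ ‖ι g * a‖ * ‖ι g‖ := norm_mul_le _ _
    _ ≤ (‖ι g‖ * ‖a‖) * ‖ι g‖ := by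
        apply mul_le_mul_of_nonneg_right (norm_mul_le _ _) (norm_nonneg _)
    _ ≤ (1 * ‖a‖) * 1 := by
        apply mul_le_mul (mul_le_mul_of_nonneg_right hgbn (norm_nonneg a)) hgbn
          (norm_nonneg _) (by positivity)
    _ = ‖a‖ := by ring

/-- Existence of good bumps supported in a given neighbourhood of `q`. -/
lemma exists_goodBump (q : Q) (f₀ : C₀(Q, ℂ)) {V : Set Q} (hV : IsOpen V) (hqV : q ∈ V)
    (hf₀V : ∀ x ∈ V, f₀ x = 1) {U : Set Q} (hU : IsOpen U) (hqU : q ∈ U) :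
    ∃ g : C₀(Q, ℂ), GoodBump q f₀ g ∧ ∀ x, x ∉ U ∩ V → g x = 0 := by
  obtain ⟨g, W, hW, hqW, hgW, hgU, hg01⟩ := exists_bump q (hU.inter hV) ⟨hqU, hqV⟩
  refine ⟨g, ⟨hg01, hgW q hqW, ?_⟩, hgU⟩
  ext x
  rw [ZeroAtInftyContinuousMap.mul_apply]
  by_cases hx : x ∈ U ∩ V
  · rw [hf₀V x hx.2, mul_one]
  · rw [hgU x hx, zero_mul]

lemma mul_div_succ_le {C δ : ℝ} (hC : 0 ≤ C) (hδ : 0 < δ) : C * (δ / (C + 1)) ≤ δ := by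
  have h1 : (0:ℝ) < C + 1 := by linarith
  have h2 : C * (δ / (C + 1)) = δ * C / (C + 1) := by ring
  rw [h2, div_le_iff₀ h1]
  nlinarith

/-- Elements of `J^unif_q` are uniformly compressed by good bumps. -/
lemma junif_compress (ι : C₀(Q, ℂ) →⋆ₙₐ[ℂ] A) (hisom : Isometry ι)
    (hcentral : ∀ (f : C₀(Q, ℂ)) (a : A), ι f * a = a * ι f)
    (q : Q) (f₀ : C₀(Q, ℂ)) {V : Set Q} (hV : IsOpen V) (hqV : q ∈ V)
    (hf₀V : ∀ x ∈ V, f₀ x = 1)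
    {j : A} (hj : j ∈ Junif ι q) {ε : ℝ} (hε : 0 < ε) :
    ∃ g : C₀(Q, ℂ), GoodBump q f₀ g ∧ ‖ι g * j * ι g‖ ≤ ε := by
  have hnorm : ∀ u : C₀(Q, ℂ), ‖ι u‖ = ‖u‖ := fun u =>
    hisom.norm_map_of_map_zero (map_zero ι) u
  have hgbn : ∀ g : C₀(Q, ℂ), GoodBump q f₀ g → ‖ι g‖ ≤ 1 := fun g hg => by
    rw [hnorm]; exact goodBump_norm_le hg
  -- compression identity for products of bumps
  have compprod : ∀ (u v : C₀(Q, ℂ)) (a : A),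
      ι (u * v) * a * ι (u * v) = ι v * (ι u * a * ι u) * ι v := by
    intro u v a
    have h1 : ι (u * v) * a * ι (u * v) = a * ι ((u * v) * (u * v)) := by
      rw [hcentral (u * v) a, mul_assoc, ← map_mul]
    have h2 : ι v * (ι u * a * ι u) * ι v = a * ι (v * (u * u) * v) :=
      calc ι v * (ι u * a * ι u) * ι v
          = ι v * ((a * ι u) * ι u) * ι v := by rw [hcentral u a]
        _ = ι v * (a * (ι u * ι u)) * ι v := by rw [mul_assoc a]
        _ = ι v * (a * ι (u * u)) * ι v := by rw [← map_mul]
        _ = (ι v * a) * ι (u * u) * ι v := by rw [← mul_assoc]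
        _ = (a * ι v) * ι (u * u) * ι v := by rw [hcentral v a]
        _ = a * (ι v * ι (u * u) * ι v) := by rw [mul_assoc, mul_assoc, mul_assoc]
        _ = a * ι (v * (u * u) * v) := by rw [← map_mul, ← map_mul]
    rw [h1, h2]
    congr 1
    congr 1
    have lhs : u * v * (u * v) = (u * u) * (v * v) := by
      rw [mul_assoc u v (u * v), mul_comm v (u * v), mul_assoc u v v, ← mul_assoc u u (v * v)]
    have rhs : v * (u * u) * v = (u * u) * (v * v) := by
      rw [mul_comm v (u * u), mul_assoc]
    rw [lhs, rhs]
  -- the set of uniformly compressible elements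
  set Zset : Set A := {a : A | ∀ δ : ℝ, 0 < δ →
    ∃ g : C₀(Q, ℂ), GoodBump q f₀ g ∧ ‖ι g * a * ι g‖ ≤ δ} with hZset
  have hcomp3 : ∀ (g : C₀(Q, ℂ)) (a : A), GoodBump q f₀ g → ‖ι g * a * ι g‖ ≤ ‖a‖ :=
    fun g a hg => compress_le ι hisom hg a
  have goodmul : ∀ gx gy : C₀(Q, ℂ), GoodBump q f₀ gx → GoodBump q f₀ gy →
      GoodBump q f₀ (gx * gy) := by
    rintro gx gy ⟨hx01, hxq, hxf⟩ ⟨hy01, hyq, hyf⟩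
    refine ⟨?_, ?_, ?_⟩
    · intro x
      obtain ⟨ex, hx0, hx1⟩ := hx01 x
      obtain ⟨ey, hy0, hy1⟩ := hy01 x
      rw [ZeroAtInftyContinuousMap.mul_apply]
      constructor
      · rw [ex, ey, ← Complex.ofReal_mul, Complex.ofReal_re]
      constructor
      · rw [ex, ey, ← Complex.ofReal_mul, Complex.ofReal_re]
        exact mul_nonneg hx0 hy0
      · rw [ex, ey, ← Complex.ofReal_mul, Complex.ofReal_re]
        exact mul_le_one₀ hx1 hy0 hy1
    · rw [ZeroAtInftyContinuousMap.mul_apply, hxq, hyq, one_mul]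
    · rw [mul_assoc, hyf]
  set ZI : TwoSidedIdeal A := TwoSidedIdeal.mk' Zset
    (by
      intro δ hδ
      obtain ⟨g, hg, _⟩ := exists_goodBump q f₀ hV hqV hf₀V hV hqV
      exact ⟨g, hg, by simp [hδ.le]⟩)
    (by
      rintro x y hx hy δ hδ
      obtain ⟨gx, hgx, hgxb⟩ := hx (δ / 2) (by linarith)
      obtain ⟨gy, hgy, hgyb⟩ := hy (δ / 2) (by linarith)
      refine ⟨gx * gy, goodmul gx gy hgx hgy, ?_⟩
      have e1 : ι (gx * gy) * (x + y) * ι (gx * gy)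
          = ι gy * (ι gx * x * ι gx) * ι gy + ι gx * (ι gy * y * ι gy) * ι gx := by
        rw [mul_add, add_mul]
        congr 1
        · exact compprod gx gy x
        · rw [mul_comm gx gy]
          exact compprod gy gx y
      rw [e1]
      calc ‖ι gy * (ι gx * x * ι gx) * ι gy + ι gx * (ι gy * y * ι gy) * ι gx‖
          ≤ ‖ι gy * (ι gx * x * ι gx) * ι gy‖ + ‖ι gx * (ι gy * y * ι gy) * ι gx‖ :=
            norm_add_le _ _
        _ ≤ ‖ι gx * x * ι gx‖ + ‖ι gy * y * ι gy‖ :=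
            add_le_add (hcomp3 gy _ hgy) (hcomp3 gx _ hgx)
        _ ≤ δ / 2 + δ / 2 := add_le_add hgxb hgyb
        _ = δ := by ring)
    (by
      rintro x hx δ hδ
      obtain ⟨g, hg, hgb⟩ := hx δ hδ
      refine ⟨g, hg, ?_⟩
      rw [mul_neg, neg_mul, norm_neg]
      exact hgb)
    (by
      rintro x y hy δ hδ
      obtain ⟨g, hg, hgb⟩ := hy (δ / (‖x‖ + 1)) (by positivity)
      refine ⟨g, hg, ?_⟩
      have e1 : ι g * (x * y) * ι g = x * (ι g * y * ι g) :=
        calc ι g * (x * y) * ι g = ((ι g * x) * y) * ι g := by rw [← mul_assoc (ι g) x y]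
          _ = ((x * ι g) * y) * ι g := by rw [hcentral g x]
          _ = x * (ι g * y * ι g) := by rw [mul_assoc x (ι g) y, mul_assoc]
      rw [e1]
      calc ‖x * (ι g * y * ι g)‖ ≤ ‖x‖ * ‖ι g * y * ι g‖ := norm_mul_le _ _
        _ ≤ ‖x‖ * (δ / (‖x‖ + 1)) := mul_le_mul_of_nonneg_left hgb (norm_nonneg x)
        _ ≤ δ := mul_div_succ_le (norm_nonneg x) hδ)
    (by
      rintro x y hx δ hδ
      obtain ⟨g, hg, hgb⟩ := hx (δ / (‖y‖ + 1)) (by positivity)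
      refine ⟨g, hg, ?_⟩
      have e1 : ι g * (x * y) * ι g = (ι g * x * ι g) * y :=
        calc ι g * (x * y) * ι g = ((ι g * x) * y) * ι g := by rw [← mul_assoc (ι g) x y]
          _ = (ι g * x) * (y * ι g) := by rw [mul_assoc]
          _ = (ι g * x) * (ι g * y) := by rw [← hcentral g y]
          _ = ((ι g * x) * ι g) * y := by rw [← mul_assoc]
      rw [e1]
      calc ‖(ι g * x * ι g) * y‖ ≤ ‖ι g * x * ι g‖ * ‖y‖ := norm_mul_le _ _
        _ ≤ (δ / (‖y‖ + 1)) * ‖y‖ := mul_le_mul_of_nonneg_right hgb (norm_nonneg y)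
        _ ≤ δ := by
            rw [mul_comm]
            exact mul_div_succ_le (norm_nonneg y) hδ) with hZI
  have hZcoe : (ZI : Set A) = Zset := TwoSidedIdeal.coe_mk' _ _ _ _ _ _
  have hZclosed : IsClosed (ZI : Set A) := by
    rw [hZcoe]
    apply isClosed_of_closure_subset
    intro a ha δ hδ
    obtain ⟨b, hb, hab⟩ := Metric.mem_closure_iff.mp ha (δ / 2) (by linarith)
    obtain ⟨g, hg, hgb⟩ := hb (δ / 2) (by linarith)
    refine ⟨g, hg, ?_⟩
    have e1 : ι g * a * ι g = ι g * (a - b) * ι g + ι g * b * ι g := by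
      rw [mul_sub, sub_mul]
      abel
    rw [e1]
    calc ‖ι g * (a - b) * ι g + ι g * b * ι g‖
        ≤ ‖ι g * (a - b) * ι g‖ + ‖ι g * b * ι g‖ := norm_add_le _ _
      _ ≤ ‖a - b‖ + (δ / 2) := add_le_add (hcomp3 g _ hg) hgb
      _ ≤ δ := by
          rw [dist_eq_norm] at hab
          linarith
  have hgen : {a : A | ∃ f : C₀(Q, ℂ), f q = 0 ∧ a = ι f} ⊆ (ZI : Set A) := by
    rintro _ ⟨f', hf'q, rfl⟩
    rw [hZcoe]
    intro δ hδ
    have hUopen : IsOpen {x : Q | ‖f' x‖ < δ} :=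
      isOpen_lt (continuous_norm.comp (map_continuous f')) continuous_const
    have hqU : q ∈ {x : Q | ‖f' x‖ < δ} := by
      simp only [Set.mem_setOf_eq, hf'q, norm_zero]
      exact hδ
    obtain ⟨g, hg, hgsupp⟩ := exists_goodBump q f₀ hV hqV hf₀V hUopen hqU
    refine ⟨g, hg, ?_⟩
    have e1 : ι g * ι f' * ι g = ι (g * f' * g) := by rw [map_mul, map_mul]
    rw [e1, hnorm]
    apply c0_norm_le _ hδ.le
    intro x
    rw [ZeroAtInftyContinuousMap.mul_apply, ZeroAtInftyContinuousMap.mul_apply]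
    by_cases hx : x ∈ {x : Q | ‖f' x‖ < δ} ∩ V
    · obtain ⟨e1x, h0x, h1x⟩ := hg.1 x
      have hgx : ‖g x‖ ≤ 1 := by
        rw [e1x, Complex.norm_real, Real.norm_eq_abs, abs_of_nonneg h0x]
        exact h1x
      calc ‖g x * f' x * g x‖ = ‖g x‖ * ‖f' x‖ * ‖g x‖ := by rw [norm_mul, norm_mul]
        _ ≤ 1 * δ * 1 := by
            apply mul_le_mul (mul_le_mul hgx (le_of_lt hx.1) (norm_nonneg _) zero_le_one)
              hgx (norm_nonneg _) (by positivity)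
        _ = δ := by ring
    · rw [hgsupp x hx, zero_mul, mul_zero, norm_zero]
      exact hδ.le
  have := closedIdealGenBy_subset hZclosed hgen hj
  rw [hZcoe] at this
  exact this ε hε

end Osided
end Stmt9Aux

/-- For a central non-degenerate inclusion `C₀(Q) ⊆ A` with
`Q^unif_simple` dense in `Q`, if there is an essentially faithful conditional expectation
`E : A → C₀(Q)`, then the inclusion `C₀(Q) ⊆ A` is essential. -/
theorem stmt9 {Q : Type*} [TopologicalSpace Q] [LocallyCompactSpace Q] [T2Space Q]
    {A : Type*} [NonUnitalCStarAlgebra A] [PartialOrder A] [StarOrderedRing A]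
    (ι : C₀(Q, ℂ) →⋆ₙₐ[ℂ] A) (hisom : Isometry ι)
    (hcentral : ∀ (f : C₀(Q, ℂ)) (a : A), ι f * a = a * ι f)
    (hnondeg : closure
      (Submodule.span ℂ {x : A | ∃ (f : C₀(Q, ℂ)) (a : A), x = ι f * a} : Set A) = Set.univ)
    (hdense : Dense {q : Q | QuotientSimpleBy (Junif ι q)})
    (E : A →L[ℂ] C₀(Q, ℂ))
    (hEnorm : ‖E‖ = 1)
    (hEproj : ∀ f : C₀(Q, ℂ), E (ι f) = f)
    (hEmod : ∀ (f₁ f₂ : C₀(Q, ℂ)) (a : A), E (ι f₁ * a * ι f₂) = f₁ * E a * f₂)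
    (hEpos : ∀ a : A, 0 ≤ a → ∀ q : Q, 0 ≤ E a q)
    (hEessfaithful : ∀ L : TwoSidedIdeal A, IsClosed (L : Set A) →
      (∀ x ∈ L, E x = 0) → (L : Set A) = {0}) :
    EssentialIncl (Set.range ι) := by
  intro L hLc hLne hLinter
  apply hEessfaithful L hLc
  intro x hx
  have hnorm : ∀ u : C₀(Q, ℂ), ‖ι u‖ = ‖u‖ := fun u =>
    hisom.norm_map_of_map_zero (map_zero ι) u
  -- main step: at every "simple" point `q`, `E x q = 0`
  have main : ∀ q : Q, QuotientSimpleBy (Junif ι q) → E x q = 0 := by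
    intro q hq
    -- the closure of `Junif ι q + L` as a two-sided ideal
    have hJI : ∀ y ∈ Junif ι q, y ∈ Stmt9Aux.genIdeal
        {a : A | ∃ f : C₀(Q, ℂ), f q = 0 ∧ a = ι f} := by
      intro y hy
      have : y ∈ (Stmt9Aux.genIdeal {a : A | ∃ f : C₀(Q, ℂ), f q = 0 ∧ a = ι f} : Set A) := by
        rw [Stmt9Aux.coe_genIdeal]
        exact hy
      exact this
    have hJI' : ∀ y, y ∈ Stmt9Aux.genIdeal
        {a : A | ∃ f : C₀(Q, ℂ), f q = 0 ∧ a = ι f} → y ∈ Junif ι q := by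
      intro y hy
      have : y ∈ (Stmt9Aux.genIdeal {a : A | ∃ f : C₀(Q, ℂ), f q = 0 ∧ a = ι f} : Set A) := hy
      rw [Stmt9Aux.coe_genIdeal] at this
      exact this
    set JI : TwoSidedIdeal A := Stmt9Aux.genIdeal {a : A | ∃ f : C₀(Q, ℂ), f q = 0 ∧ a = ι f}
      with hJIdef
    set Sset : Set A := {a : A | ∃ j ∈ Junif ι q, ∃ l ∈ (L : Set A), a = j + l} with hSset
    have hSadd : ∀ a ∈ Sset, ∀ b ∈ Sset, a + b ∈ Sset := by
      rintro _ ⟨j, hj, l, hl, rfl⟩ _ ⟨j', hj', l', hl', rfl⟩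
      exact ⟨j + j', hJI' _ (JI.add_mem (hJI _ hj) (hJI _ hj')), l + l',
        L.add_mem hl hl', by abel⟩
    have hSzero : (0 : A) ∈ Sset :=
      ⟨0, hJI' _ JI.zero_mem, 0, L.zero_mem, by abel⟩
    have hSneg : ∀ a ∈ Sset, -a ∈ Sset := by
      rintro _ ⟨j, hj, l, hl, rfl⟩
      exact ⟨-j, hJI' _ (JI.neg_mem (hJI _ hj)), -l, L.neg_mem hl, by abel⟩
    have hSmull : ∀ (c : A), ∀ a ∈ Sset, c * a ∈ Sset := by
      rintro c _ ⟨j, hj, l, hl, rfl⟩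
      exact ⟨c * j, hJI' _ (JI.mul_mem_left c j (hJI _ hj)), c * l,
        L.mul_mem_left c l hl, by rw [mul_add]⟩
    have hSmulr : ∀ (c : A), ∀ a ∈ Sset, a * c ∈ Sset := by
      rintro c _ ⟨j, hj, l, hl, rfl⟩
      exact ⟨j * c, hJI' _ (JI.mul_mem_right j c (hJI _ hj)), l * c,
        L.mul_mem_right l c hl, by rw [add_mul]⟩
    set M : TwoSidedIdeal A := TwoSidedIdeal.mk' (closure Sset)
      (subset_closure hSzero)
      (fun {a b} ha hb =>
        map_mem_closure₂ continuous_add ha hb (fun u hu v hv => hSadd u hu v hv))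
      (fun {a} ha => map_mem_closure (f := fun b : A => -b) continuous_neg ha
        (fun b hb => hSneg b hb))
      (fun {c a} ha => map_mem_closure (f := fun b : A => c * b) (continuous_mul_left c) ha
        (fun b hb => hSmull c b hb))
      (fun {a c} ha => map_mem_closure (f := fun b : A => b * c) (continuous_mul_right c) ha
        (fun b hb => hSmulr c b hb))
      with hM
    have hMcoe : (M : Set A) = closure Sset := TwoSidedIdeal.coe_mk' _ _ _ _ _ _
    have hJsubM : Junif ι q ⊆ (M : Set A) := by
      intro j hj
      rw [hMcoe]
      exact subset_closure ⟨j, hj, 0, L.zero_mem, by abel⟩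
    rcases hq.2 M (by rw [hMcoe]; exact isClosed_closure) hJsubM with hMJ | hMuniv
    · -- case `M = Junif`: then `x ∈ Junif` and `E x q = 0`
      have hxJ : x ∈ Junif ι q := by
        have hxM : x ∈ (M : Set A) := by
          rw [hMcoe]
          exact subset_closure ⟨0, hJI' _ JI.zero_mem, x, hx, by abel⟩
        rw [hMJ] at hxM
        exact hxM
      exact Stmt9Aux.eval_junif ι hisom hcentral E hEproj hEmod q hxJ
    · -- case `M = univ`: contradiction
      exfalso
      obtain ⟨f₀, V, hVopen, hqV, hf₀V, -, hf₀01⟩ :=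
        Stmt9Aux.exists_bump q isOpen_univ (Set.mem_univ q)
      have hιf₀ : ι f₀ ∈ closure Sset := by
        have h1 : ι f₀ ∈ (M : Set A) := by rw [hMuniv]; trivial
        rw [hMcoe] at h1
        exact h1
      obtain ⟨b, hbS, hbd⟩ := Metric.mem_closure_iff.mp hιf₀ (1/3) (by norm_num)
      obtain ⟨j, hj, l, hl, rfl⟩ := hbS
      obtain ⟨g, hg, hgj⟩ := Stmt9Aux.junif_compress ι hisom hcentral q f₀ hVopen hqV hf₀V hj
        (by norm_num : (0:ℝ) < 1/3)
      have hl' : ι g * l * ι g ∈ L := L.mul_mem_right _ _ (L.mul_mem_left _ _ hl)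
      -- the key lemma applied to `g * g`
      have hgg : ∀ x' : Q, (g * g) x' = (((g * g) x').re : ℂ) ∧ 0 ≤ ((g * g) x').re := by
        intro x'
        obtain ⟨e1, h0, h1⟩ := hg.1 x'
        have e2 : (g * g) x' = ((((g x').re) * ((g x').re) : ℝ) : ℂ) := by
          rw [ZeroAtInftyContinuousMap.mul_apply]
          conv_lhs => rw [e1]
          push_cast
          ring
        constructor
        · rw [e2]
          simp
        · rw [e2, Complex.ofReal_re]
          exact mul_nonneg h0 h0
      have hkey := Stmt9Aux.key ι hisom L hLc hLinter (g * g) (fun x' => (hgg x').1)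
        (fun x' => (hgg x').2) hl'
      have h1n : (1 : ℝ) ≤ ‖g * g‖ := by
        have h2 := Stmt9Aux.c0_apply_le_norm (g * g) q
        rw [ZeroAtInftyContinuousMap.mul_apply, hg.2.1, mul_one, norm_one] at h2
        exact h2
      have e4 : ι (g * g) = ι g * ι f₀ * ι g := by
        have e5 : g * g = g * f₀ * g := by rw [hg.2.2]
        rw [e5, map_mul, map_mul]
      have e3 : ι (g * g) - ι g * l * ι g
          = ι g * (ι f₀ - (j + l)) * ι g + ι g * j * ι g := by
        rw [e4]
        noncomm_ring
      have hfinal : (1 : ℝ) ≤ 2/3 := by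
        calc (1 : ℝ) ≤ ‖g * g‖ := h1n
          _ ≤ ‖ι (g * g) - ι g * l * ι g‖ := hkey
          _ = ‖ι g * (ι f₀ - (j + l)) * ι g + ι g * j * ι g‖ := by rw [e3]
          _ ≤ ‖ι g * (ι f₀ - (j + l)) * ι g‖ + ‖ι g * j * ι g‖ := norm_add_le _ _
          _ ≤ ‖ι f₀ - (j + l)‖ + 1/3 :=
              add_le_add (Stmt9Aux.compress_le ι hisom hg _) hgj
          _ ≤ 2/3 := by
              rw [dist_eq_norm] at hbd
              linarith
      linarith
  -- conclude by density
  have hEx0 : ∀ q : Q, E x q = 0 := by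
    intro q
    have hcl : IsClosed {q : Q | E x q = 0} :=
      isClosed_eq (map_continuous (E x)) continuous_const
    have hsub : {q : Q | QuotientSimpleBy (Junif ι q)} ⊆ {q : Q | E x q = 0} := main
    have := closure_mono hsub
    rw [hdense.closure_eq, hcl.closure_eq] at this
    exact this (Set.mem_univ q)
  ext q
  exact hEx0 q
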